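/- Let (Ω, F, P) be a probability space, (A_n)_{n∈ℕ} a sequence of measurable sets, and ψ : ℕ → ℕ. The following are equivalent: (1) for all m ∈ ℕ and all g : ℕ → ℕ there exists k ≤ ψ(m) with P(⋃_{i=k}^{g(k)} A_i) ≤ 2^{-m}; (2) for all m, n ∈ ℕ, P(⋃_{i = ψ(m)}^{ψ(m)+n} A_i) ≤ 2^{-m}. -/

import Mathlib

open MeasureTheory Set ENNReal

theorem metastable_modulus_iff_modulus {Ω : Type*} [MeasurableSpace Ω]
    (μ : Measure Ω) [IsProbabilityMeasure μ]
    (A : ℕ → Set Ω) (hmeas : ∀ n, MeasurableSet (A n))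
    (ψ : ℕ → ℕ) :
    (∀ m (g : ℕ → ℕ), ∃ k ≤ ψ m, μ (⋃ i ∈ Finset.Icc k (g k), A i) ≤ (1 / 2 : ℝ≥0∞) ^ m) ↔
      (∀ m n, μ (⋃ i ∈ Finset.Icc (ψ m) (ψ m + n), A i) ≤ (1 / 2 : ℝ≥0∞) ^ m) := by
  constructor
  · intro h m n
    obtain ⟨k, hk, hμ⟩ := h m (fun _ => ψ m + n)
    refine le_trans (measure_mono ?_) hμ
    apply Set.biUnion_subset_biUnion_left
    intro i hi
    simp only [Finset.coe_Icc, Set.mem_Icc, Finset.mem_coe, Finset.mem_Icc,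
      Finset.mem_val] at hi ⊢
    simp_all [Finset.mem_Icc]
    omega
  · intro h m g
    refine ⟨ψ m, le_refl _, ?_⟩
    refine le_trans (measure_mono ?_) (h m (g (ψ m) - ψ m))
    apply Set.biUnion_subset_biUnion_left
    intro i hi
    simp only [Finset.coe_Icc, Set.mem_Icc, Finset.mem_coe, Finset.mem_Icc,
      Finset.mem_val] at hi ⊢
    simp_all [Finset.mem_Icc]
    omega
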